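/- There exist infinitely many rational Diophantine sextuples, i.e., infinitely many sets of six distinct nonzero rational numbers such that the product of any two distinct elements plus 1 is a rational square. -/

import Mathlib

def n1 (t : ℚ) : ℚ := (-18 : ℚ) * t + (18 : ℚ) * t^3
def d1 (t : ℚ) : ℚ := (1 : ℚ) + (-34 : ℚ) * t^2 + (1 : ℚ) * t^4
noncomputable def N1 : Polynomial ℚ := Polynomial.C (-18 : ℚ) * Polynomial.X + Polynomial.C (18 : ℚ) * Polynomial.X^3
noncomputable def D1 : Polynomial ℚ := Polynomial.C (1 : ℚ) + Polynomial.C (-34 : ℚ) * Polynomial.X^2 + Polynomial.C (1 : ℚ) * Polynomial.X^4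
def n2 (t : ℚ) : ℚ := (-1 : ℚ) + (-11 : ℚ) * t + (-26 : ℚ) * t^2 + (26 : ℚ) * t^3 + (11 : ℚ) * t^4 + (1 : ℚ) * t^5
def d2 (t : ℚ) : ℚ := (6 : ℚ) * t + (-30 : ℚ) * t^2 + (-30 : ℚ) * t^3 + (6 : ℚ) * t^4
noncomputable def N2 : Polynomial ℚ := Polynomial.C (-1 : ℚ) + Polynomial.C (-11 : ℚ) * Polynomial.X + Polynomial.C (-26 : ℚ) * Polynomial.X^2 + Polynomial.C (26 : ℚ) * Polynomial.X^3 + Polynomial.C (11 : ℚ) * Polynomial.X^4 + Polynomial.C (1 : ℚ) * Polynomial.X^5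
noncomputable def D2 : Polynomial ℚ := Polynomial.C (6 : ℚ) * Polynomial.X + Polynomial.C (-30 : ℚ) * Polynomial.X^2 + Polynomial.C (-30 : ℚ) * Polynomial.X^3 + Polynomial.C (6 : ℚ) * Polynomial.X^4
def n3 (t : ℚ) : ℚ := (1 : ℚ) + (-11 : ℚ) * t + (26 : ℚ) * t^2 + (26 : ℚ) * t^3 + (-11 : ℚ) * t^4 + (1 : ℚ) * t^5
def d3 (t : ℚ) : ℚ := (-6 : ℚ) * t + (-30 : ℚ) * t^2 + (30 : ℚ) * t^3 + (6 : ℚ) * t^4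
noncomputable def N3 : Polynomial ℚ := Polynomial.C (1 : ℚ) + Polynomial.C (-11 : ℚ) * Polynomial.X + Polynomial.C (26 : ℚ) * Polynomial.X^2 + Polynomial.C (26 : ℚ) * Polynomial.X^3 + Polynomial.C (-11 : ℚ) * Polynomial.X^4 + Polynomial.C (1 : ℚ) * Polynomial.X^5
noncomputable def D3 : Polynomial ℚ := Polynomial.C (-6 : ℚ) * Polynomial.X + Polynomial.C (-30 : ℚ) * Polynomial.X^2 + Polynomial.C (30 : ℚ) * Polynomial.X^3 + Polynomial.C (6 : ℚ) * Polynomial.X^4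
def n4 (t : ℚ) : ℚ := (-384 : ℚ) + (7062 : ℚ) * t^2 + (298890 : ℚ) * t^4 + (-4203042 : ℚ) * t^6 + (37761090 : ℚ) * t^8 + (-191187540 : ℚ) * t^10 + (310752468 : ℚ) * t^12 + (-310752468 : ℚ) * t^14 + (191187540 : ℚ) * t^16 + (-37761090 : ℚ) * t^18 + (4203042 : ℚ) * t^20 + (-298890 : ℚ) * t^22 + (-7062 : ℚ) * t^24 + (384 : ℚ) * t^26
def d4 (t : ℚ) : ℚ := (1369 : ℚ) * t + (-65490 : ℚ) * t^3 + (1503615 : ℚ) * t^5 + (-18243122 : ℚ) * t^7 + (119700675 : ℚ) * t^9 + (-283607100 : ℚ) * t^11 + (378197322 : ℚ) * t^13 + (-283607100 : ℚ) * t^15 + (119700675 : ℚ) * t^17 + (-18243122 : ℚ) * t^19 + (1503615 : ℚ) * t^21 + (-65490 : ℚ) * t^23 + (1369 : ℚ) * t^25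
noncomputable def N4 : Polynomial ℚ := Polynomial.C (-384 : ℚ) + Polynomial.C (7062 : ℚ) * Polynomial.X^2 + Polynomial.C (298890 : ℚ) * Polynomial.X^4 + Polynomial.C (-4203042 : ℚ) * Polynomial.X^6 + Polynomial.C (37761090 : ℚ) * Polynomial.X^8 + Polynomial.C (-191187540 : ℚ) * Polynomial.X^10 + Polynomial.C (310752468 : ℚ) * Polynomial.X^12 + Polynomial.C (-310752468 : ℚ) * Polynomial.X^14 + Polynomial.C (191187540 : ℚ) * Polynomial.X^16 + Polynomial.C (-37761090 : ℚ) * Polynomial.X^18 + Polynomial.C (4203042 : ℚ) * Polynomial.X^20 + Polynomial.C (-298890 : ℚ) * Polynomial.X^22 + Polynomial.C (-7062 : ℚ) * Polynomial.X^24 + Polynomial.C (384 : ℚ) * Polynomial.X^26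
noncomputable def D4 : Polynomial ℚ := Polynomial.C (1369 : ℚ) * Polynomial.X + Polynomial.C (-65490 : ℚ) * Polynomial.X^3 + Polynomial.C (1503615 : ℚ) * Polynomial.X^5 + Polynomial.C (-18243122 : ℚ) * Polynomial.X^7 + Polynomial.C (119700675 : ℚ) * Polynomial.X^9 + Polynomial.C (-283607100 : ℚ) * Polynomial.X^11 + Polynomial.C (378197322 : ℚ) * Polynomial.X^13 + Polynomial.C (-283607100 : ℚ) * Polynomial.X^15 + Polynomial.C (119700675 : ℚ) * Polynomial.X^17 + Polynomial.C (-18243122 : ℚ) * Polynomial.X^19 + Polynomial.C (1503615 : ℚ) * Polynomial.X^21 + Polynomial.C (-65490 : ℚ) * Polynomial.X^23 + Polynomial.C (1369 : ℚ) * Polynomial.X^25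
def n5 (t : ℚ) : ℚ := (5600 : ℚ) * t + (-147768 : ℚ) * t^3 + (2735040 : ℚ) * t^5 + (-13398488 : ℚ) * t^7 + (-175505010 : ℚ) * t^9 + (832142820 : ℚ) * t^11 + (-439322362 : ℚ) * t^13 + (-2385042624 : ℚ) * t^15 + (8732991420 : ℚ) * t^17 + (-13010024032 : ℚ) * t^19 + (5367898524 : ℚ) * t^21 + (-1216733640 : ℚ) * t^23 + (135092278 : ℚ) * t^25 + (26006484 : ℚ) * t^27 + (-4354530 : ℚ) * t^29 + (174656 : ℚ) * t^31 + (-2016 : ℚ) * t^33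
def d5 (t : ℚ) : ℚ := (-432 : ℚ) + (45648 : ℚ) * t^2 + (-1611048 : ℚ) * t^4 + (18913704 : ℚ) * t^6 + (10459245 : ℚ) * t^8 + (-296541711 : ℚ) * t^10 + (818325267 : ℚ) * t^12 + (440925879 : ℚ) * t^14 + (-5467642638 : ℚ) * t^16 + (11382310170 : ℚ) * t^18 + (-9514559394 : ℚ) * t^20 + (3119291286 : ℚ) * t^22 + (-541123167 : ℚ) * t^24 + (28866261 : ℚ) * t^26 + (2884743 : ℚ) * t^28 + (-531237 : ℚ) * t^30 + (-13344 : ℚ) * t^32 + (768 : ℚ) * t^34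
noncomputable def N5 : Polynomial ℚ := Polynomial.C (5600 : ℚ) * Polynomial.X + Polynomial.C (-147768 : ℚ) * Polynomial.X^3 + Polynomial.C (2735040 : ℚ) * Polynomial.X^5 + Polynomial.C (-13398488 : ℚ) * Polynomial.X^7 + Polynomial.C (-175505010 : ℚ) * Polynomial.X^9 + Polynomial.C (832142820 : ℚ) * Polynomial.X^11 + Polynomial.C (-439322362 : ℚ) * Polynomial.X^13 + Polynomial.C (-2385042624 : ℚ) * Polynomial.X^15 + Polynomial.C (8732991420 : ℚ) * Polynomial.X^17 + Polynomial.C (-13010024032 : ℚ) * Polynomial.X^19 + Polynomial.C (5367898524 : ℚ) * Polynomial.X^21 + Polynomial.C (-1216733640 : ℚ) * Polynomial.X^23 + Polynomial.C (135092278 : ℚ) * Polynomial.X^25 + Polynomial.C (26006484 : ℚ) * Polynomial.X^27 + Polynomial.C (-4354530 : ℚ) * Polynomial.X^29 + Polynomial.C (174656 : ℚ) * Polynomial.X^31 + Polynomial.C (-2016 : ℚ) * Polynomial.X^33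
noncomputable def D5 : Polynomial ℚ := Polynomial.C (-432 : ℚ) + Polynomial.C (45648 : ℚ) * Polynomial.X^2 + Polynomial.C (-1611048 : ℚ) * Polynomial.X^4 + Polynomial.C (18913704 : ℚ) * Polynomial.X^6 + Polynomial.C (10459245 : ℚ) * Polynomial.X^8 + Polynomial.C (-296541711 : ℚ) * Polynomial.X^10 + Polynomial.C (818325267 : ℚ) * Polynomial.X^12 + Polynomial.C (440925879 : ℚ) * Polynomial.X^14 + Polynomial.C (-5467642638 : ℚ) * Polynomial.X^16 + Polynomial.C (11382310170 : ℚ) * Polynomial.X^18 + Polynomial.C (-9514559394 : ℚ) * Polynomial.X^20 + Polynomial.C (3119291286 : ℚ) * Polynomial.X^22 + Polynomial.C (-541123167 : ℚ) * Polynomial.X^24 + Polynomial.C (28866261 : ℚ) * Polynomial.X^26 + Polynomial.C (2884743 : ℚ) * Polynomial.X^28 + Polynomial.C (-531237 : ℚ) * Polynomial.X^30 + Polynomial.C (-13344 : ℚ) * Polynomial.X^32 + Polynomial.C (768 : ℚ) * Polynomial.X^34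
def n6 (t : ℚ) : ℚ := (-2016 : ℚ) * t + (174656 : ℚ) * t^3 + (-4354530 : ℚ) * t^5 + (26006484 : ℚ) * t^7 + (135092278 : ℚ) * t^9 + (-1216733640 : ℚ) * t^11 + (5367898524 : ℚ) * t^13 + (-13010024032 : ℚ) * t^15 + (8732991420 : ℚ) * t^17 + (-2385042624 : ℚ) * t^19 + (-439322362 : ℚ) * t^21 + (832142820 : ℚ) * t^23 + (-175505010 : ℚ) * t^25 + (-13398488 : ℚ) * t^27 + (2735040 : ℚ) * t^29 + (-147768 : ℚ) * t^31 + (5600 : ℚ) * t^33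
def d6 (t : ℚ) : ℚ := (-768 : ℚ) + (13344 : ℚ) * t^2 + (531237 : ℚ) * t^4 + (-2884743 : ℚ) * t^6 + (-28866261 : ℚ) * t^8 + (541123167 : ℚ) * t^10 + (-3119291286 : ℚ) * t^12 + (9514559394 : ℚ) * t^14 + (-11382310170 : ℚ) * t^16 + (5467642638 : ℚ) * t^18 + (-440925879 : ℚ) * t^20 + (-818325267 : ℚ) * t^22 + (296541711 : ℚ) * t^24 + (-10459245 : ℚ) * t^26 + (-18913704 : ℚ) * t^28 + (1611048 : ℚ) * t^30 + (-45648 : ℚ) * t^32 + (432 : ℚ) * t^34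
noncomputable def N6 : Polynomial ℚ := Polynomial.C (-2016 : ℚ) * Polynomial.X + Polynomial.C (174656 : ℚ) * Polynomial.X^3 + Polynomial.C (-4354530 : ℚ) * Polynomial.X^5 + Polynomial.C (26006484 : ℚ) * Polynomial.X^7 + Polynomial.C (135092278 : ℚ) * Polynomial.X^9 + Polynomial.C (-1216733640 : ℚ) * Polynomial.X^11 + Polynomial.C (5367898524 : ℚ) * Polynomial.X^13 + Polynomial.C (-13010024032 : ℚ) * Polynomial.X^15 + Polynomial.C (8732991420 : ℚ) * Polynomial.X^17 + Polynomial.C (-2385042624 : ℚ) * Polynomial.X^19 + Polynomial.C (-439322362 : ℚ) * Polynomial.X^21 + Polynomial.C (832142820 : ℚ) * Polynomial.X^23 + Polynomial.C (-175505010 : ℚ) * Polynomial.X^25 + Polynomial.C (-13398488 : ℚ) * Polynomial.X^27 + Polynomial.C (2735040 : ℚ) * Polynomial.X^29 + Polynomial.C (-147768 : ℚ) * Polynomial.X^31 + Polynomial.C (5600 : ℚ) * Polynomial.X^33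
noncomputable def D6 : Polynomial ℚ := Polynomial.C (-768 : ℚ) + Polynomial.C (13344 : ℚ) * Polynomial.X^2 + Polynomial.C (531237 : ℚ) * Polynomial.X^4 + Polynomial.C (-2884743 : ℚ) * Polynomial.X^6 + Polynomial.C (-28866261 : ℚ) * Polynomial.X^8 + Polynomial.C (541123167 : ℚ) * Polynomial.X^10 + Polynomial.C (-3119291286 : ℚ) * Polynomial.X^12 + Polynomial.C (9514559394 : ℚ) * Polynomial.X^14 + Polynomial.C (-11382310170 : ℚ) * Polynomial.X^16 + Polynomial.C (5467642638 : ℚ) * Polynomial.X^18 + Polynomial.C (-440925879 : ℚ) * Polynomial.X^20 + Polynomial.C (-818325267 : ℚ) * Polynomial.X^22 + Polynomial.C (296541711 : ℚ) * Polynomial.X^24 + Polynomial.C (-10459245 : ℚ) * Polynomial.X^26 + Polynomial.C (-18913704 : ℚ) * Polynomial.X^28 + Polynomial.C (1611048 : ℚ) * Polynomial.X^30 + Polynomial.C (-45648 : ℚ) * Polynomial.X^32 + Polynomial.C (432 : ℚ) * Polynomial.X^34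
noncomputable def e1 (t : ℚ) : ℚ := n1 t / d1 t
noncomputable def e2 (t : ℚ) : ℚ := n2 t / d2 t
noncomputable def e3 (t : ℚ) : ℚ := n3 t / d3 t
noncomputable def e4 (t : ℚ) : ℚ := n4 t / d4 t
noncomputable def e5 (t : ℚ) : ℚ := n5 t / d5 t
noncomputable def e6 (t : ℚ) : ℚ := n6 t / d6 t
def u12 (t : ℚ) : ℚ := (2 : ℚ) + (2 : ℚ) * t^2
def v12 (t : ℚ) : ℚ := (1 : ℚ) + (-6 : ℚ) * t + (1 : ℚ) * t^2
noncomputable def V12 : Polynomial ℚ := Polynomial.C (1 : ℚ) + Polynomial.C (-6 : ℚ) * Polynomial.X + Polynomial.C (1 : ℚ) * Polynomial.X^2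
def u13 (t : ℚ) : ℚ := (2 : ℚ) + (2 : ℚ) * t^2
def v13 (t : ℚ) : ℚ := (1 : ℚ) + (6 : ℚ) * t + (1 : ℚ) * t^2
noncomputable def V13 : Polynomial ℚ := Polynomial.C (1 : ℚ) + Polynomial.C (6 : ℚ) * Polynomial.X + Polynomial.C (1 : ℚ) * Polynomial.X^2
def u14 (t : ℚ) : ℚ := (91 : ℚ) + (195 : ℚ) * t^2 + (-1983 : ℚ) * t^4 + (7490 : ℚ) * t^6 + (-1983 : ℚ) * t^8 + (195 : ℚ) * t^10 + (91 : ℚ) * t^12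
def v14 (t : ℚ) : ℚ := (37 : ℚ) + (-885 : ℚ) * t^2 + (9735 : ℚ) * t^4 + (-13678 : ℚ) * t^6 + (9735 : ℚ) * t^8 + (-885 : ℚ) * t^10 + (37 : ℚ) * t^12
noncomputable def V14 : Polynomial ℚ := Polynomial.C (37 : ℚ) + Polynomial.C (-885 : ℚ) * Polynomial.X^2 + Polynomial.C (9735 : ℚ) * Polynomial.X^4 + Polynomial.C (-13678 : ℚ) * Polynomial.X^6 + Polynomial.C (9735 : ℚ) * Polynomial.X^8 + Polynomial.C (-885 : ℚ) * Polynomial.X^10 + Polynomial.C (37 : ℚ) * Polynomial.X^12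
def u15 (t : ℚ) : ℚ := (12 : ℚ) + (568 : ℚ) * t^2 + (-7279 : ℚ) * t^4 + (47308 : ℚ) * t^6 + (31061 : ℚ) * t^8 + (-27608 : ℚ) * t^10 + (9755 : ℚ) * t^12 + (12484 : ℚ) * t^14 + (-781 : ℚ) * t^16 + (16 : ℚ) * t^18
def v15 (t : ℚ) : ℚ := (-12 : ℚ) + (832 : ℚ) * t^2 + (-14263 : ℚ) * t^4 + (-7910 : ℚ) * t^6 + (100367 : ℚ) * t^8 + (-262148 : ℚ) * t^10 + (58727 : ℚ) * t^12 + (-6278 : ℚ) * t^14 + (-403 : ℚ) * t^16 + (16 : ℚ) * t^18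
noncomputable def V15 : Polynomial ℚ := Polynomial.C (-12 : ℚ) + Polynomial.C (832 : ℚ) * Polynomial.X^2 + Polynomial.C (-14263 : ℚ) * Polynomial.X^4 + Polynomial.C (-7910 : ℚ) * Polynomial.X^6 + Polynomial.C (100367 : ℚ) * Polynomial.X^8 + Polynomial.C (-262148 : ℚ) * Polynomial.X^10 + Polynomial.C (58727 : ℚ) * Polynomial.X^12 + Polynomial.C (-6278 : ℚ) * Polynomial.X^14 + Polynomial.C (-403 : ℚ) * Polynomial.X^16 + Polynomial.C (16 : ℚ) * Polynomial.X^18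
def u16 (t : ℚ) : ℚ := (16 : ℚ) + (-781 : ℚ) * t^2 + (12484 : ℚ) * t^4 + (9755 : ℚ) * t^6 + (-27608 : ℚ) * t^8 + (31061 : ℚ) * t^10 + (47308 : ℚ) * t^12 + (-7279 : ℚ) * t^14 + (568 : ℚ) * t^16 + (12 : ℚ) * t^18
def v16 (t : ℚ) : ℚ := (-16 : ℚ) + (403 : ℚ) * t^2 + (6278 : ℚ) * t^4 + (-58727 : ℚ) * t^6 + (262148 : ℚ) * t^8 + (-100367 : ℚ) * t^10 + (7910 : ℚ) * t^12 + (14263 : ℚ) * t^14 + (-832 : ℚ) * t^16 + (12 : ℚ) * t^18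
noncomputable def V16 : Polynomial ℚ := Polynomial.C (-16 : ℚ) + Polynomial.C (403 : ℚ) * Polynomial.X^2 + Polynomial.C (6278 : ℚ) * Polynomial.X^4 + Polynomial.C (-58727 : ℚ) * Polynomial.X^6 + Polynomial.C (262148 : ℚ) * Polynomial.X^8 + Polynomial.C (-100367 : ℚ) * Polynomial.X^10 + Polynomial.C (7910 : ℚ) * Polynomial.X^12 + Polynomial.C (14263 : ℚ) * Polynomial.X^14 + Polynomial.C (-832 : ℚ) * Polynomial.X^16 + Polynomial.C (12 : ℚ) * Polynomial.X^18
def u23 (t : ℚ) : ℚ := (1 : ℚ) + (1 : ℚ) * t^2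
def v23 (t : ℚ) : ℚ := (6 : ℚ) * t
noncomputable def V23 : Polynomial ℚ := Polynomial.C (6 : ℚ) * Polynomial.X
def u24 (t : ℚ) : ℚ := (8 : ℚ) + (64 : ℚ) * t + (200 : ℚ) * t^2 + (-345 : ℚ) * t^3 + (-840 : ℚ) * t^4 + (3876 : ℚ) * t^5 + (-3464 : ℚ) * t^6 + (-3094 : ℚ) * t^7 + (-3464 : ℚ) * t^8 + (3876 : ℚ) * t^9 + (-840 : ℚ) * t^10 + (-345 : ℚ) * t^11 + (200 : ℚ) * t^12 + (64 : ℚ) * t^13 + (8 : ℚ) * t^14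
def v24 (t : ℚ) : ℚ := (37 : ℚ) * t + (-885 : ℚ) * t^3 + (9735 : ℚ) * t^5 + (-13678 : ℚ) * t^7 + (9735 : ℚ) * t^9 + (-885 : ℚ) * t^11 + (37 : ℚ) * t^13
noncomputable def V24 : Polynomial ℚ := Polynomial.C (37 : ℚ) * Polynomial.X + Polynomial.C (-885 : ℚ) * Polynomial.X^3 + Polynomial.C (9735 : ℚ) * Polynomial.X^5 + Polynomial.C (-13678 : ℚ) * Polynomial.X^7 + Polynomial.C (9735 : ℚ) * Polynomial.X^9 + Polynomial.C (-885 : ℚ) * Polynomial.X^11 + Polynomial.C (37 : ℚ) * Polynomial.X^13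
def u25 (t : ℚ) : ℚ := (64 : ℚ) + (30 : ℚ) * t + (-1126 : ℚ) * t^2 + (4746 : ℚ) * t^3 + (-242 : ℚ) * t^4 + (-13212 : ℚ) * t^5 + (-26548 : ℚ) * t^6 + (-10452 : ℚ) * t^7 + (7144 : ℚ) * t^8 + (-21846 : ℚ) * t^9 + (32834 : ℚ) * t^10 + (-18846 : ℚ) * t^11 + (1630 : ℚ) * t^12 + (10416 : ℚ) * t^13 + (3032 : ℚ) * t^14 + (-24 : ℚ) * t^15 + (-404 : ℚ) * t^16 + (36 : ℚ) * t^17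
def v25 (t : ℚ) : ℚ := (-36 : ℚ) + (180 : ℚ) * t + (1452 : ℚ) * t^2 + (-6396 : ℚ) * t^3 + (-5865 : ℚ) * t^4 + (-1203 : ℚ) * t^5 + (-10647 : ℚ) * t^6 + (41355 : ℚ) * t^7 + (63618 : ℚ) * t^8 + (-121962 : ℚ) * t^9 + (-118290 : ℚ) * t^10 + (45258 : ℚ) * t^11 + (22923 : ℚ) * t^12 + (-6615 : ℚ) * t^13 + (-2067 : ℚ) * t^14 + (183 : ℚ) * t^15 + (-240 : ℚ) * t^16 + (48 : ℚ) * t^17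
noncomputable def V25 : Polynomial ℚ := Polynomial.C (-36 : ℚ) + Polynomial.C (180 : ℚ) * Polynomial.X + Polynomial.C (1452 : ℚ) * Polynomial.X^2 + Polynomial.C (-6396 : ℚ) * Polynomial.X^3 + Polynomial.C (-5865 : ℚ) * Polynomial.X^4 + Polynomial.C (-1203 : ℚ) * Polynomial.X^5 + Polynomial.C (-10647 : ℚ) * Polynomial.X^6 + Polynomial.C (41355 : ℚ) * Polynomial.X^7 + Polynomial.C (63618 : ℚ) * Polynomial.X^8 + Polynomial.C (-121962 : ℚ) * Polynomial.X^9 + Polynomial.C (-118290 : ℚ) * Polynomial.X^10 + Polynomial.C (45258 : ℚ) * Polynomial.X^11 + Polynomial.C (22923 : ℚ) * Polynomial.X^12 + Polynomial.C (-6615 : ℚ) * Polynomial.X^13 + Polynomial.C (-2067 : ℚ) * Polynomial.X^14 + Polynomial.C (183 : ℚ) * Polynomial.X^15 + Polynomial.C (-240 : ℚ) * Polynomial.X^16 + Polynomial.C (48 : ℚ) * Polynomial.X^17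
def u26 (t : ℚ) : ℚ := (36 : ℚ) + (-404 : ℚ) * t + (-24 : ℚ) * t^2 + (3032 : ℚ) * t^3 + (10416 : ℚ) * t^4 + (1630 : ℚ) * t^5 + (-18846 : ℚ) * t^6 + (32834 : ℚ) * t^7 + (-21846 : ℚ) * t^8 + (7144 : ℚ) * t^9 + (-10452 : ℚ) * t^10 + (-26548 : ℚ) * t^11 + (-13212 : ℚ) * t^12 + (-242 : ℚ) * t^13 + (4746 : ℚ) * t^14 + (-1126 : ℚ) * t^15 + (30 : ℚ) * t^16 + (64 : ℚ) * t^17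
def v26 (t : ℚ) : ℚ := (-48 : ℚ) + (240 : ℚ) * t + (-183 : ℚ) * t^2 + (2067 : ℚ) * t^3 + (6615 : ℚ) * t^4 + (-22923 : ℚ) * t^5 + (-45258 : ℚ) * t^6 + (118290 : ℚ) * t^7 + (121962 : ℚ) * t^8 + (-63618 : ℚ) * t^9 + (-41355 : ℚ) * t^10 + (10647 : ℚ) * t^11 + (1203 : ℚ) * t^12 + (5865 : ℚ) * t^13 + (6396 : ℚ) * t^14 + (-1452 : ℚ) * t^15 + (-180 : ℚ) * t^16 + (36 : ℚ) * t^17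
noncomputable def V26 : Polynomial ℚ := Polynomial.C (-48 : ℚ) + Polynomial.C (240 : ℚ) * Polynomial.X + Polynomial.C (-183 : ℚ) * Polynomial.X^2 + Polynomial.C (2067 : ℚ) * Polynomial.X^3 + Polynomial.C (6615 : ℚ) * Polynomial.X^4 + Polynomial.C (-22923 : ℚ) * Polynomial.X^5 + Polynomial.C (-45258 : ℚ) * Polynomial.X^6 + Polynomial.C (118290 : ℚ) * Polynomial.X^7 + Polynomial.C (121962 : ℚ) * Polynomial.X^8 + Polynomial.C (-63618 : ℚ) * Polynomial.X^9 + Polynomial.C (-41355 : ℚ) * Polynomial.X^10 + Polynomial.C (10647 : ℚ) * Polynomial.X^11 + Polynomial.C (1203 : ℚ) * Polynomial.X^12 + Polynomial.C (5865 : ℚ) * Polynomial.X^13 + Polynomial.C (6396 : ℚ) * Polynomial.X^14 + Polynomial.C (-1452 : ℚ) * Polynomial.X^15 + Polynomial.C (-180 : ℚ) * Polynomial.X^16 + Polynomial.C (36 : ℚ) * Polynomial.X^17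
def u34 (t : ℚ) : ℚ := (8 : ℚ) + (-64 : ℚ) * t + (200 : ℚ) * t^2 + (345 : ℚ) * t^3 + (-840 : ℚ) * t^4 + (-3876 : ℚ) * t^5 + (-3464 : ℚ) * t^6 + (3094 : ℚ) * t^7 + (-3464 : ℚ) * t^8 + (-3876 : ℚ) * t^9 + (-840 : ℚ) * t^10 + (345 : ℚ) * t^11 + (200 : ℚ) * t^12 + (-64 : ℚ) * t^13 + (8 : ℚ) * t^14
def v34 (t : ℚ) : ℚ := (37 : ℚ) * t + (-885 : ℚ) * t^3 + (9735 : ℚ) * t^5 + (-13678 : ℚ) * t^7 + (9735 : ℚ) * t^9 + (-885 : ℚ) * t^11 + (37 : ℚ) * t^13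
noncomputable def V34 : Polynomial ℚ := Polynomial.C (37 : ℚ) * Polynomial.X + Polynomial.C (-885 : ℚ) * Polynomial.X^3 + Polynomial.C (9735 : ℚ) * Polynomial.X^5 + Polynomial.C (-13678 : ℚ) * Polynomial.X^7 + Polynomial.C (9735 : ℚ) * Polynomial.X^9 + Polynomial.C (-885 : ℚ) * Polynomial.X^11 + Polynomial.C (37 : ℚ) * Polynomial.X^13
def u35 (t : ℚ) : ℚ := (-64 : ℚ) + (30 : ℚ) * t + (1126 : ℚ) * t^2 + (4746 : ℚ) * t^3 + (242 : ℚ) * t^4 + (-13212 : ℚ) * t^5 + (26548 : ℚ) * t^6 + (-10452 : ℚ) * t^7 + (-7144 : ℚ) * t^8 + (-21846 : ℚ) * t^9 + (-32834 : ℚ) * t^10 + (-18846 : ℚ) * t^11 + (-1630 : ℚ) * t^12 + (10416 : ℚ) * t^13 + (-3032 : ℚ) * t^14 + (-24 : ℚ) * t^15 + (404 : ℚ) * t^16 + (36 : ℚ) * t^17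
def v35 (t : ℚ) : ℚ := (36 : ℚ) + (180 : ℚ) * t + (-1452 : ℚ) * t^2 + (-6396 : ℚ) * t^3 + (5865 : ℚ) * t^4 + (-1203 : ℚ) * t^5 + (10647 : ℚ) * t^6 + (41355 : ℚ) * t^7 + (-63618 : ℚ) * t^8 + (-121962 : ℚ) * t^9 + (118290 : ℚ) * t^10 + (45258 : ℚ) * t^11 + (-22923 : ℚ) * t^12 + (-6615 : ℚ) * t^13 + (2067 : ℚ) * t^14 + (183 : ℚ) * t^15 + (240 : ℚ) * t^16 + (48 : ℚ) * t^17
noncomputable def V35 : Polynomial ℚ := Polynomial.C (36 : ℚ) + Polynomial.C (180 : ℚ) * Polynomial.X + Polynomial.C (-1452 : ℚ) * Polynomial.X^2 + Polynomial.C (-6396 : ℚ) * Polynomial.X^3 + Polynomial.C (5865 : ℚ) * Polynomial.X^4 + Polynomial.C (-1203 : ℚ) * Polynomial.X^5 + Polynomial.C (10647 : ℚ) * Polynomial.X^6 + Polynomial.C (41355 : ℚ) * Polynomial.X^7 + Polynomial.C (-63618 : ℚ) * Polynomial.X^8 + Polynomial.C (-121962 : ℚ) * Polynomial.X^9 + Polynomial.C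 (118290 : ℚ) * Polynomial.X^10 + Polynomial.C (45258 : ℚ) * Polynomial.X^11 + Polynomial.C (-22923 : ℚ) * Polynomial.X^12 + Polynomial.C (-6615 : ℚ) * Polynomial.X^13 + Polynomial.C (2067 : ℚ) * Polynomial.X^14 + Polynomial.C (183 : ℚ) * Polynomial.X^15 + Polynomial.C (240 : ℚ) * Polynomial.X^16 + Polynomial.C (48 : ℚ) * Polynomial.X^17
def u36 (t : ℚ) : ℚ := (-36 : ℚ) + (-404 : ℚ) * t + (24 : ℚ) * t^2 + (3032 : ℚ) * t^3 + (-10416 : ℚ) * t^4 + (1630 : ℚ) * t^5 + (18846 : ℚ) * t^6 + (32834 : ℚ) * t^7 + (21846 : ℚ) * t^8 + (7144 : ℚ) * t^9 + (10452 : ℚ) * t^10 + (-26548 : ℚ) * t^11 + (13212 : ℚ) * t^12 + (-242 : ℚ) * t^13 + (-4746 : ℚ) * t^14 + (-1126 : ℚ) * t^15 + (-30 : ℚ) * t^16 + (64 : ℚ) * t^17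
def v36 (t : ℚ) : ℚ := (48 : ℚ) + (240 : ℚ) * t + (183 : ℚ) * t^2 + (2067 : ℚ) * t^3 + (-6615 : ℚ) * t^4 + (-22923 : ℚ) * t^5 + (45258 : ℚ) * t^6 + (118290 : ℚ) * t^7 + (-121962 : ℚ) * t^8 + (-63618 : ℚ) * t^9 + (41355 : ℚ) * t^10 + (10647 : ℚ) * t^11 + (-1203 : ℚ) * t^12 + (5865 : ℚ) * t^13 + (-6396 : ℚ) * t^14 + (-1452 : ℚ) * t^15 + (180 : ℚ) * t^16 + (36 : ℚ) * t^17
noncomputable def V36 : Polynomial ℚ := Polynomial.C (48 : ℚ) + Polynomial.C (240 : ℚ) * Polynomial.X + Polynomial.C (183 : ℚ) * Polynomial.X^2 + Polynomial.C (2067 : ℚ) * Polynomial.X^3 + Polynomial.C (-6615 : ℚ) * Polynomial.X^4 + Polynomial.C (-22923 : ℚ) * Polynomial.X^5 + Polynomial.C (45258 : ℚ) * Polynomial.X^6 + Polynomial.C (118290 : ℚ) * Polynomial.X^7 + Polynomial.C (-121962 : ℚ) * Polynomial.X^8 + Polynomial.C (-63618 : ℚ) * Polynomial.X^9 + Polynomial.C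 (41355 : ℚ) * Polynomial.X^10 + Polynomial.C (10647 : ℚ) * Polynomial.X^11 + Polynomial.C (-1203 : ℚ) * Polynomial.X^12 + Polynomial.C (5865 : ℚ) * Polynomial.X^13 + Polynomial.C (-6396 : ℚ) * Polynomial.X^14 + Polynomial.C (-1452 : ℚ) * Polynomial.X^15 + Polynomial.C (180 : ℚ) * Polynomial.X^16 + Polynomial.C (36 : ℚ) * Polynomial.X^17
def u45 (t : ℚ) : ℚ := (956 : ℚ) + (-15884 : ℚ) * t^2 + (387525 : ℚ) * t^4 + (-3531979 : ℚ) * t^6 + (2645821 : ℚ) * t^8 + (-11371500 : ℚ) * t^10 + (37921458 : ℚ) * t^12 + (-14022642 : ℚ) * t^14 + (50268150 : ℚ) * t^16 + (-13544128 : ℚ) * t^18 + (1954057 : ℚ) * t^20 + (-372795 : ℚ) * t^22 + (12305 : ℚ) * t^24 + (304 : ℚ) * t^26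
def v45 (t : ℚ) : ℚ := (-444 : ℚ) + (26308 : ℚ) * t^2 + (-485955 : ℚ) * t^4 + (4044963 : ℚ) * t^6 + (-1618595 : ℚ) * t^8 + (-31405860 : ℚ) * t^10 + (113671890 : ℚ) * t^12 + (-145136478 : ℚ) * t^14 + (98142030 : ℚ) * t^16 + (-23189736 : ℚ) * t^18 + (2761969 : ℚ) * t^20 + (-24525 : ℚ) * t^22 + (-8943 : ℚ) * t^24 + (592 : ℚ) * t^26
noncomputable def V45 : Polynomial ℚ := Polynomial.C (-444 : ℚ) + Polynomial.C (26308 : ℚ) * Polynomial.X^2 + Polynomial.C (-485955 : ℚ) * Polynomial.X^4 + Polynomial.C (4044963 : ℚ) * Polynomial.X^6 + Polynomial.C (-1618595 : ℚ) * Polynomial.X^8 + Polynomial.C (-31405860 : ℚ) * Polynomial.X^10 + Polynomial.C (113671890 : ℚ) * Polynomial.X^12 + Polynomial.C (-145136478 : ℚ) * Polynomial.X^14 + Polynomial.C (98142030 : ℚ) * Polynomial.X^16 + Polynomial.C (-23189736 : ℚ) * Polynomial.X^18 + Polynomial.C (2761969 : ℚ) * Polynomial.X^20 + Polynomial.C (-24525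 : ℚ) * Polynomial.X^22 + Polynomial.C (-8943 : ℚ) * Polynomial.X^24 + Polynomial.C (592 : ℚ) * Polynomial.X^26
def u46 (t : ℚ) : ℚ := (304 : ℚ) + (12305 : ℚ) * t^2 + (-372795 : ℚ) * t^4 + (1954057 : ℚ) * t^6 + (-13544128 : ℚ) * t^8 + (50268150 : ℚ) * t^10 + (-14022642 : ℚ) * t^12 + (37921458 : ℚ) * t^14 + (-11371500 : ℚ) * t^16 + (2645821 : ℚ) * t^18 + (-3531979 : ℚ) * t^20 + (387525 : ℚ) * t^22 + (-15884 : ℚ) * t^24 + (956 : ℚ) * t^26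
def v46 (t : ℚ) : ℚ := (-592 : ℚ) + (8943 : ℚ) * t^2 + (24525 : ℚ) * t^4 + (-2761969 : ℚ) * t^6 + (23189736 : ℚ) * t^8 + (-98142030 : ℚ) * t^10 + (145136478 : ℚ) * t^12 + (-113671890 : ℚ) * t^14 + (31405860 : ℚ) * t^16 + (1618595 : ℚ) * t^18 + (-4044963 : ℚ) * t^20 + (485955 : ℚ) * t^22 + (-26308 : ℚ) * t^24 + (444 : ℚ) * t^26
noncomputable def V46 : Polynomial ℚ := Polynomial.C (-592 : ℚ) + Polynomial.C (8943 : ℚ) * Polynomial.X^2 + Polynomial.C (24525 : ℚ) * Polynomial.X^4 + Polynomial.C (-2761969 : ℚ) * Polynomial.X^6 + Polynomial.C (23189736 : ℚ) * Polynomial.X^8 + Polynomial.C (-98142030 : ℚ) * Polynomial.X^10 + Polynomial.C (145136478 : ℚ) * Polynomial.X^12 + Polynomial.C (-113671890 : ℚ) * Polynomial.X^14 + Polynomial.C (31405860 : ℚ) * Polynomial.X^16 + Polynomial.C (1618595 : ℚ) * Polynomial.X^18 + Polynomial.C (-4044963 : ℚ) * Polynomial.X^20 + Polynomial.C (485955 :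 ℚ) * Polynomial.X^22 + Polynomial.C (-26308 : ℚ) * Polynomial.X^24 + Polynomial.C (444 : ℚ) * Polynomial.X^26
def u56 (t : ℚ) : ℚ := (576 : ℚ) + (-45236 : ℚ) * t^2 + (734892 : ℚ) * t^4 + (218697 : ℚ) * t^6 + (37161143 : ℚ) * t^8 + (-374085957 : ℚ) * t^10 + (710565045 : ℚ) * t^12 + (-1870093658 : ℚ) * t^14 + (2569286322 : ℚ) * t^16 + (2569286322 : ℚ) * t^18 + (-1870093658 : ℚ) * t^20 + (710565045 : ℚ) * t^22 + (-374085957 : ℚ) * t^24 + (37161143 : ℚ) * t^26 + (218697 : ℚ) * t^28 + (734892 : ℚ) * t^30 + (-45236 : ℚ) * t^32 + (576 : ℚ) * t^34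
def v56 (t : ℚ) : ℚ := (-576 : ℚ) + (35436 : ℚ) * t^2 + (-313548 : ℚ) * t^4 + (-10151337 : ℚ) * t^6 + (95117931 : ℚ) * t^8 + (-350623167 : ℚ) * t^10 + (-356847915 : ℚ) * t^12 + (4169780610 : ℚ) * t^14 + (-10622195118 : ℚ) * t^16 + (10622195118 : ℚ) * t^18 + (-4169780610 : ℚ) * t^20 + (356847915 : ℚ) * t^22 + (350623167 : ℚ) * t^24 + (-95117931 : ℚ) * t^26 + (10151337 : ℚ) * t^28 + (313548 : ℚ) * t^30 + (-35436 : ℚ) * t^32 + (576 : ℚ) * t^34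
noncomputable def V56 : Polynomial ℚ := Polynomial.C (-576 : ℚ) + Polynomial.C (35436 : ℚ) * Polynomial.X^2 + Polynomial.C (-313548 : ℚ) * Polynomial.X^4 + Polynomial.C (-10151337 : ℚ) * Polynomial.X^6 + Polynomial.C (95117931 : ℚ) * Polynomial.X^8 + Polynomial.C (-350623167 : ℚ) * Polynomial.X^10 + Polynomial.C (-356847915 : ℚ) * Polynomial.X^12 + Polynomial.C (4169780610 : ℚ) * Polynomial.X^14 + Polynomial.C (-10622195118 : ℚ) * Polynomial.X^16 + Polynomial.C (10622195118 : ℚ) * Polynomial.X^18 + Polynomial.C (-4169780610 : ℚ) * Polynomial.X^20 + Polynomial.C (356847915 : ℚ) * Polynomial.X^22 + Polynomial.C (350623167 : ℚ) * Polynomial.X^24 + Polynomial.C (-95117931 : ℚ) * Polynomial.X^26 + Polynomial.C (10151337 : ℚ) * Polynomial.X^28 + Polynomial.C (313548 : ℚ) * Polynomial.X^30 + Polynomial.C (-35436 : ℚ) * Polynomial.X^32 + Polynomial.C (576 : ℚ) * Polynomial.X^34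

noncomputable def DF12 : Polynomial ℚ := N1 * D2 - N2 * D1
noncomputable def DF13 : Polynomial ℚ := N1 * D3 - N3 * D1
noncomputable def DF14 : Polynomial ℚ := N1 * D4 - N4 * D1
noncomputable def DF15 : Polynomial ℚ := N1 * D5 - N5 * D1
noncomputable def DF16 : Polynomial ℚ := N1 * D6 - N6 * D1
noncomputable def DF23 : Polynomial ℚ := N2 * D3 - N3 * D2
noncomputable def DF24 : Polynomial ℚ := N2 * D4 - N4 * D2
noncomputable def DF25 : Polynomial ℚ := N2 * D5 - N5 * D2
noncomputable def DF26 : Polynomial ℚ := N2 * D6 - N6 * D2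
noncomputable def DF34 : Polynomial ℚ := N3 * D4 - N4 * D3
noncomputable def DF35 : Polynomial ℚ := N3 * D5 - N5 * D3
noncomputable def DF36 : Polynomial ℚ := N3 * D6 - N6 * D3
noncomputable def DF45 : Polynomial ℚ := N4 * D5 - N5 * D4
noncomputable def DF46 : Polynomial ℚ := N4 * D6 - N6 * D4
noncomputable def DF56 : Polynomial ℚ := N5 * D6 - N6 * D5
theorem evN1 (t : ℚ) : (N1).eval t = n1 t := by simp only [N1, n1, Polynomial.eval_add, Polynomial.eval_mul, Polynomial.eval_sub, Polynomial.eval_pow, Polynomial.eval_C, Polynomial.eval_X]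
theorem evD1 (t : ℚ) : (D1).eval t = d1 t := by simp only [D1, d1, Polynomial.eval_add, Polynomial.eval_mul, Polynomial.eval_sub, Polynomial.eval_pow, Polynomial.eval_C, Polynomial.eval_X]
theorem evN2 (t : ℚ) : (N2).eval t = n2 t := by simp only [N2, n2, Polynomial.eval_add, Polynomial.eval_mul, Polynomial.eval_sub, Polynomial.eval_pow, Polynomial.eval_C, Polynomial.eval_X]
theorem evD2 (t : ℚ) : (D2).eval t = d2 t := by simp only [D2, d2, Polynomial.eval_add, Polynomial.eval_mul, Polynomial.eval_sub, Polynomial.eval_pow, Polynomial.eval_C, Polynomial.eval_X]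
theorem evN3 (t : ℚ) : (N3).eval t = n3 t := by simp only [N3, n3, Polynomial.eval_add, Polynomial.eval_mul, Polynomial.eval_sub, Polynomial.eval_pow, Polynomial.eval_C, Polynomial.eval_X]
theorem evD3 (t : ℚ) : (D3).eval t = d3 t := by simp only [D3, d3, Polynomial.eval_add, Polynomial.eval_mul, Polynomial.eval_sub, Polynomial.eval_pow, Polynomial.eval_C, Polynomial.eval_X]
theorem evN4 (t : ℚ) : (N4).eval t = n4 t := by simp only [N4, n4, Polynomial.eval_add, Polynomial.eval_mul, Polynomial.eval_sub, Polynomial.eval_pow, Polynomial.eval_C, Polynomial.eval_X]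
theorem evD4 (t : ℚ) : (D4).eval t = d4 t := by simp only [D4, d4, Polynomial.eval_add, Polynomial.eval_mul, Polynomial.eval_sub, Polynomial.eval_pow, Polynomial.eval_C, Polynomial.eval_X]
theorem evN5 (t : ℚ) : (N5).eval t = n5 t := by simp only [N5, n5, Polynomial.eval_add, Polynomial.eval_mul, Polynomial.eval_sub, Polynomial.eval_pow, Polynomial.eval_C, Polynomial.eval_X]
theorem evD5 (t : ℚ) : (D5).eval t = d5 t := by simp only [D5, d5, Polynomial.eval_add, Polynomial.eval_mul, Polynomial.eval_sub, Polynomial.eval_pow, Polynomial.eval_C, Polynomial.eval_X]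
theorem evN6 (t : ℚ) : (N6).eval t = n6 t := by simp only [N6, n6, Polynomial.eval_add, Polynomial.eval_mul, Polynomial.eval_sub, Polynomial.eval_pow, Polynomial.eval_C, Polynomial.eval_X]
theorem evD6 (t : ℚ) : (D6).eval t = d6 t := by simp only [D6, d6, Polynomial.eval_add, Polynomial.eval_mul, Polynomial.eval_sub, Polynomial.eval_pow, Polynomial.eval_C, Polynomial.eval_X]
theorem evV12 (t : ℚ) : (V12).eval t = v12 t := by simp only [V12, v12, Polynomial.eval_add, Polynomial.eval_mul, Polynomial.eval_sub, Polynomial.eval_pow, Polynomial.eval_C, Polynomial.eval_X]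
theorem evV13 (t : ℚ) : (V13).eval t = v13 t := by simp only [V13, v13, Polynomial.eval_add, Polynomial.eval_mul, Polynomial.eval_sub, Polynomial.eval_pow, Polynomial.eval_C, Polynomial.eval_X]
theorem evV14 (t : ℚ) : (V14).eval t = v14 t := by simp only [V14, v14, Polynomial.eval_add, Polynomial.eval_mul, Polynomial.eval_sub, Polynomial.eval_pow, Polynomial.eval_C, Polynomial.eval_X]
theorem evV15 (t : ℚ) : (V15).eval t = v15 t := by simp only [V15, v15, Polynomial.eval_add, Polynomial.eval_mul, Polynomial.eval_sub, Polynomial.eval_pow, Polynomial.eval_C, Polynomial.eval_X]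
theorem evV16 (t : ℚ) : (V16).eval t = v16 t := by simp only [V16, v16, Polynomial.eval_add, Polynomial.eval_mul, Polynomial.eval_sub, Polynomial.eval_pow, Polynomial.eval_C, Polynomial.eval_X]
theorem evV23 (t : ℚ) : (V23).eval t = v23 t := by simp only [V23, v23, Polynomial.eval_add, Polynomial.eval_mul, Polynomial.eval_sub, Polynomial.eval_pow, Polynomial.eval_C, Polynomial.eval_X]
theorem evV24 (t : ℚ) : (V24).eval t = v24 t := by simp only [V24, v24, Polynomial.eval_add, Polynomial.eval_mul, Polynomial.eval_sub, Polynomial.eval_pow, Polynomial.eval_C, Polynomial.eval_X]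
theorem evV25 (t : ℚ) : (V25).eval t = v25 t := by simp only [V25, v25, Polynomial.eval_add, Polynomial.eval_mul, Polynomial.eval_sub, Polynomial.eval_pow, Polynomial.eval_C, Polynomial.eval_X]
theorem evV26 (t : ℚ) : (V26).eval t = v26 t := by simp only [V26, v26, Polynomial.eval_add, Polynomial.eval_mul, Polynomial.eval_sub, Polynomial.eval_pow, Polynomial.eval_C, Polynomial.eval_X]
theorem evV34 (t : ℚ) : (V34).eval t = v34 t := by simp only [V34, v34, Polynomial.eval_add, Polynomial.eval_mul, Polynomial.eval_sub, Polynomial.eval_pow, Polynomial.eval_C, Polynomial.eval_X]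
theorem evV35 (t : ℚ) : (V35).eval t = v35 t := by simp only [V35, v35, Polynomial.eval_add, Polynomial.eval_mul, Polynomial.eval_sub, Polynomial.eval_pow, Polynomial.eval_C, Polynomial.eval_X]
theorem evV36 (t : ℚ) : (V36).eval t = v36 t := by simp only [V36, v36, Polynomial.eval_add, Polynomial.eval_mul, Polynomial.eval_sub, Polynomial.eval_pow, Polynomial.eval_C, Polynomial.eval_X]
theorem evV45 (t : ℚ) : (V45).eval t = v45 t := by simp only [V45, v45, Polynomial.eval_add, Polynomial.eval_mul, Polynomial.eval_sub, Polynomial.eval_pow, Polynomial.eval_C, Polynomial.eval_X]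
theorem evV46 (t : ℚ) : (V46).eval t = v46 t := by simp only [V46, v46, Polynomial.eval_add, Polynomial.eval_mul, Polynomial.eval_sub, Polynomial.eval_pow, Polynomial.eval_C, Polynomial.eval_X]
theorem evV56 (t : ℚ) : (V56).eval t = v56 t := by simp only [V56, v56, Polynomial.eval_add, Polynomial.eval_mul, Polynomial.eval_sub, Polynomial.eval_pow, Polynomial.eval_C, Polynomial.eval_X]
theorem evDF12 (t : ℚ) : (DF12).eval t = n1 t * d2 t - n2 t * d1 t := by
  simp only [DF12, Polynomial.eval_sub, Polynomial.eval_mul, evN1, evD2, evN2, evD1]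
theorem evDF13 (t : ℚ) : (DF13).eval t = n1 t * d3 t - n3 t * d1 t := by
  simp only [DF13, Polynomial.eval_sub, Polynomial.eval_mul, evN1, evD3, evN3, evD1]
theorem evDF14 (t : ℚ) : (DF14).eval t = n1 t * d4 t - n4 t * d1 t := by
  simp only [DF14, Polynomial.eval_sub, Polynomial.eval_mul, evN1, evD4, evN4, evD1]
theorem evDF15 (t : ℚ) : (DF15).eval t = n1 t * d5 t - n5 t * d1 t := by
  simp only [DF15, Polynomial.eval_sub, Polynomial.eval_mul, evN1, evD5, evN5, evD1]
theorem evDF16 (t : ℚ) : (DF16).eval t = n1 t * d6 t - n6 t * d1 t := by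
  simp only [DF16, Polynomial.eval_sub, Polynomial.eval_mul, evN1, evD6, evN6, evD1]
theorem evDF23 (t : ℚ) : (DF23).eval t = n2 t * d3 t - n3 t * d2 t := by
  simp only [DF23, Polynomial.eval_sub, Polynomial.eval_mul, evN2, evD3, evN3, evD2]
theorem evDF24 (t : ℚ) : (DF24).eval t = n2 t * d4 t - n4 t * d2 t := by
  simp only [DF24, Polynomial.eval_sub, Polynomial.eval_mul, evN2, evD4, evN4, evD2]
theorem evDF25 (t : ℚ) : (DF25).eval t = n2 t * d5 t - n5 t * d2 t := by
  simp only [DF25, Polynomial.eval_sub, Polynomial.eval_mul, evN2, evD5, evN5, evD2]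
theorem evDF26 (t : ℚ) : (DF26).eval t = n2 t * d6 t - n6 t * d2 t := by
  simp only [DF26, Polynomial.eval_sub, Polynomial.eval_mul, evN2, evD6, evN6, evD2]
theorem evDF34 (t : ℚ) : (DF34).eval t = n3 t * d4 t - n4 t * d3 t := by
  simp only [DF34, Polynomial.eval_sub, Polynomial.eval_mul, evN3, evD4, evN4, evD3]
theorem evDF35 (t : ℚ) : (DF35).eval t = n3 t * d5 t - n5 t * d3 t := by
  simp only [DF35, Polynomial.eval_sub, Polynomial.eval_mul, evN3, evD5, evN5, evD3]
theorem evDF36 (t : ℚ) : (DF36).eval t = n3 t * d6 t - n6 t * d3 t := by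
  simp only [DF36, Polynomial.eval_sub, Polynomial.eval_mul, evN3, evD6, evN6, evD3]
theorem evDF45 (t : ℚ) : (DF45).eval t = n4 t * d5 t - n5 t * d4 t := by
  simp only [DF45, Polynomial.eval_sub, Polynomial.eval_mul, evN4, evD5, evN5, evD4]
theorem evDF46 (t : ℚ) : (DF46).eval t = n4 t * d6 t - n6 t * d4 t := by
  simp only [DF46, Polynomial.eval_sub, Polynomial.eval_mul, evN4, evD6, evN6, evD4]
theorem evDF56 (t : ℚ) : (DF56).eval t = n5 t * d6 t - n6 t * d5 t := by
  simp only [DF56, Polynomial.eval_sub, Polynomial.eval_mul, evN5, evD6, evN6, evD5]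
noncomputable def Pstar : Polynomial ℚ := N1 * D1 * N2 * D2 * N3 * D3 * N4 * D4 * N5 * D5 * N6 * D6 * V12 * V13 * V14 * V15 * V16 * V23 * V24 * V25 * V26 * V34 * V35 * V36 * V45 * V46 * V56 * DF12 * DF13 * DF14 * DF15 * DF16 * DF23 * DF24 * DF25 * DF26 * DF34 * DF35 * DF36 * DF45 * DF46 * DF56

theorem hPstarEval : Pstar.eval (1/2) ≠ 0 := by
  simp only [Pstar, Polynomial.eval_mul, evN1, evD1, evN2, evD2, evN3, evD3, evN4, evD4, evN5, evD5, evN6, evD6, evV12, evV13, evV14, evV15, evV16, evV23, evV24, evV25, evV26, evV34, evV35, evV36, evV45, evV46, evV56, evDF12, evDF13, evDF14, evDF15, evDF16, evDF23, evDF24, evDF25, evDF26, evDF34, evDF35, evDF36, evDF45, evDF46, evDF56]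
  norm_num [n1, d1, n2, d2, n3, d3, n4, d4, n5, d5, n6, d6, v12, v13, v14, v15, v16, v23, v24, v25, v26, v34, v35, v36, v45, v46, v56]

theorem hPstarNe : Pstar ≠ 0 := fun h => hPstarEval (by rw [h]; simp)

theorem Qv_ne (v : ℚ) (hv : v ≠ 0) : N1 - Polynomial.C v * D1 ≠ 0 := by
  intro h
  have h0 : (N1 - Polynomial.C v * D1).eval 0 = 0 := by rw [h]; simp
  rw [Polynomial.eval_sub, Polynomial.eval_mul, Polynomial.eval_C, evN1, evD1] at h0
  norm_num [n1, d1] at h0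
  exact hv h0

theorem div_ne_div_aux {a b c d : ℚ} (hb : b ≠ 0) (hd : d ≠ 0)
    (h : a * d - c * b ≠ 0) : a / b ≠ c / d := by
  intro he
  rw [div_eq_div_iff hb hd] at he
  exact h (by rw [he]; ring)

theorem sq12 (t : ℚ) (hi : d1 t ≠ 0) (hj : d2 t ≠ 0) (hv : v12 t ≠ 0) :
    e1 t * e2 t + 1 = (u12 t / v12 t)^2 := by
  simp only [e1, e2]
  field_simp
  simp only [n1, d1, n2, d2, u12, v12]
  ring
theorem sq13 (t : ℚ) (hi : d1 t ≠ 0) (hj : d3 t ≠ 0) (hv : v13 t ≠ 0) :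
    e1 t * e3 t + 1 = (u13 t / v13 t)^2 := by
  simp only [e1, e3]
  field_simp
  simp only [n1, d1, n3, d3, u13, v13]
  ring
theorem sq14 (t : ℚ) (hi : d1 t ≠ 0) (hj : d4 t ≠ 0) (hv : v14 t ≠ 0) :
    e1 t * e4 t + 1 = (u14 t / v14 t)^2 := by
  simp only [e1, e4]
  field_simp
  simp only [n1, d1, n4, d4, u14, v14]
  ring
theorem sq15 (t : ℚ) (hi : d1 t ≠ 0) (hj : d5 t ≠ 0) (hv : v15 t ≠ 0) :
    e1 t * e5 t + 1 = (u15 t / v15 t)^2 := by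
  simp only [e1, e5]
  field_simp
  simp only [n1, d1, n5, d5, u15, v15]
  ring
theorem sq16 (t : ℚ) (hi : d1 t ≠ 0) (hj : d6 t ≠ 0) (hv : v16 t ≠ 0) :
    e1 t * e6 t + 1 = (u16 t / v16 t)^2 := by
  simp only [e1, e6]
  field_simp
  simp only [n1, d1, n6, d6, u16, v16]
  ring
theorem sq23 (t : ℚ) (hi : d2 t ≠ 0) (hj : d3 t ≠ 0) (hv : v23 t ≠ 0) :
    e2 t * e3 t + 1 = (u23 t / v23 t)^2 := by
  simp only [e2, e3]
  field_simp
  simp only [n2, d2, n3, d3, u23, v23]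
  ring
theorem sq24 (t : ℚ) (hi : d2 t ≠ 0) (hj : d4 t ≠ 0) (hv : v24 t ≠ 0) :
    e2 t * e4 t + 1 = (u24 t / v24 t)^2 := by
  simp only [e2, e4]
  field_simp
  simp only [n2, d2, n4, d4, u24, v24]
  ring
theorem sq25 (t : ℚ) (hi : d2 t ≠ 0) (hj : d5 t ≠ 0) (hv : v25 t ≠ 0) :
    e2 t * e5 t + 1 = (u25 t / v25 t)^2 := by
  simp only [e2, e5]
  field_simp
  simp only [n2, d2, n5, d5, u25, v25]
  ring
theorem sq26 (t : ℚ) (hi : d2 t ≠ 0) (hj : d6 t ≠ 0) (hv : v26 t ≠ 0) :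
    e2 t * e6 t + 1 = (u26 t / v26 t)^2 := by
  simp only [e2, e6]
  field_simp
  simp only [n2, d2, n6, d6, u26, v26]
  ring
theorem sq34 (t : ℚ) (hi : d3 t ≠ 0) (hj : d4 t ≠ 0) (hv : v34 t ≠ 0) :
    e3 t * e4 t + 1 = (u34 t / v34 t)^2 := by
  simp only [e3, e4]
  field_simp
  simp only [n3, d3, n4, d4, u34, v34]
  ring
theorem sq35 (t : ℚ) (hi : d3 t ≠ 0) (hj : d5 t ≠ 0) (hv : v35 t ≠ 0) :
    e3 t * e5 t + 1 = (u35 t / v35 t)^2 := by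
  simp only [e3, e5]
  field_simp
  simp only [n3, d3, n5, d5, u35, v35]
  ring
theorem sq36 (t : ℚ) (hi : d3 t ≠ 0) (hj : d6 t ≠ 0) (hv : v36 t ≠ 0) :
    e3 t * e6 t + 1 = (u36 t / v36 t)^2 := by
  simp only [e3, e6]
  field_simp
  simp only [n3, d3, n6, d6, u36, v36]
  ring
theorem sq45 (t : ℚ) (hi : d4 t ≠ 0) (hj : d5 t ≠ 0) (hv : v45 t ≠ 0) :
    e4 t * e5 t + 1 = (u45 t / v45 t)^2 := by
  simp only [e4, e5]
  field_simp
  simp only [n4, d4, n5, d5, u45, v45]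
  ring
theorem sq46 (t : ℚ) (hi : d4 t ≠ 0) (hj : d6 t ≠ 0) (hv : v46 t ≠ 0) :
    e4 t * e6 t + 1 = (u46 t / v46 t)^2 := by
  simp only [e4, e6]
  field_simp
  simp only [n4, d4, n6, d6, u46, v46]
  ring
theorem sq56 (t : ℚ) (hi : d5 t ≠ 0) (hj : d6 t ≠ 0) (hv : v56 t ≠ 0) :
    e5 t * e6 t + 1 = (u56 t / v56 t)^2 := by
  simp only [e5, e6]
  field_simp
  simp only [n5, d5, n6, d6, u56, v56]
  ring
theorem key (t : ℚ) (ht : Pstar.eval t ≠ 0) :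
    (({e1 t, e2 t, e3 t, e4 t, e5 t, e6 t} : Finset ℚ).card = 6 ∧ (0 : ℚ) ∉ ({e1 t, e2 t, e3 t, e4 t, e5 t, e6 t} : Finset ℚ) ∧
      ∀ a ∈ ({e1 t, e2 t, e3 t, e4 t, e5 t, e6 t} : Finset ℚ), ∀ b ∈ ({e1 t, e2 t, e3 t, e4 t, e5 t, e6 t} : Finset ℚ), a ≠ b → ∃ q : ℚ, a * b + 1 = q ^ 2)
    ∧ d1 t ≠ 0 ∧ n1 t ≠ 0 := by
  simp only [Pstar, Polynomial.eval_mul, mul_ne_zero_iff] at ht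
  obtain ⟨⟨⟨⟨⟨⟨⟨⟨⟨⟨⟨⟨⟨⟨⟨⟨⟨⟨⟨⟨⟨⟨⟨⟨⟨⟨⟨⟨⟨⟨⟨⟨⟨⟨⟨⟨⟨⟨⟨⟨⟨hN1, hD1⟩, hN2⟩, hD2⟩, hN3⟩, hD3⟩, hN4⟩, hD4⟩, hN5⟩, hD5⟩, hN6⟩, hD6⟩, hV12⟩, hV13⟩, hV14⟩, hV15⟩, hV16⟩, hV23⟩, hV24⟩, hV25⟩, hV26⟩, hV34⟩, hV35⟩, hV36⟩, hV45⟩, hV46⟩, hV56⟩, hDF12⟩, hDF13⟩, hDF14⟩, hDF15⟩, hDF16⟩, hDF23⟩, hDF24⟩, hDF25⟩, hDF26⟩, hDF34⟩, hDF35⟩, hDF36⟩, hDF45⟩, hDF46⟩, hDF56⟩ := ht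
  rw [evN1] at hN1
  rw [evD1] at hD1
  rw [evN2] at hN2
  rw [evD2] at hD2
  rw [evN3] at hN3
  rw [evD3] at hD3
  rw [evN4] at hN4
  rw [evD4] at hD4
  rw [evN5] at hN5
  rw [evD5] at hD5
  rw [evN6] at hN6
  rw [evD6] at hD6
  rw [evV12] at hV12
  rw [evV13] at hV13
  rw [evV14] at hV14
  rw [evV15] at hV15
  rw [evV16] at hV16
  rw [evV23] at hV23
  rw [evV24] at hV24
  rw [evV25] at hV25
  rw [evV26] at hV26
  rw [evV34] at hV34
  rw [evV35] at hV35
  rw [evV36] at hV36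
  rw [evV45] at hV45
  rw [evV46] at hV46
  rw [evV56] at hV56
  rw [evDF12] at hDF12
  rw [evDF13] at hDF13
  rw [evDF14] at hDF14
  rw [evDF15] at hDF15
  rw [evDF16] at hDF16
  rw [evDF23] at hDF23
  rw [evDF24] at hDF24
  rw [evDF25] at hDF25
  rw [evDF26] at hDF26
  rw [evDF34] at hDF34
  rw [evDF35] at hDF35
  rw [evDF36] at hDF36
  rw [evDF45] at hDF45
  rw [evDF46] at hDF46
  rw [evDF56] at hDF56
  have he1 : e1 t ≠ 0 := by simp only [e1]; exact div_ne_zero hN1 hD1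
  have he2 : e2 t ≠ 0 := by simp only [e2]; exact div_ne_zero hN2 hD2
  have he3 : e3 t ≠ 0 := by simp only [e3]; exact div_ne_zero hN3 hD3
  have he4 : e4 t ≠ 0 := by simp only [e4]; exact div_ne_zero hN4 hD4
  have he5 : e5 t ≠ 0 := by simp only [e5]; exact div_ne_zero hN5 hD5
  have he6 : e6 t ≠ 0 := by simp only [e6]; exact div_ne_zero hN6 hD6
  have hne12 : e1 t ≠ e2 t := by simp only [e1, e2]; exact div_ne_div_aux hD1 hD2 hDF12
  have hne13 : e1 t ≠ e3 t := by simp only [e1, e3]; exact div_ne_div_aux hD1 hD3 hDF13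
  have hne14 : e1 t ≠ e4 t := by simp only [e1, e4]; exact div_ne_div_aux hD1 hD4 hDF14
  have hne15 : e1 t ≠ e5 t := by simp only [e1, e5]; exact div_ne_div_aux hD1 hD5 hDF15
  have hne16 : e1 t ≠ e6 t := by simp only [e1, e6]; exact div_ne_div_aux hD1 hD6 hDF16
  have hne23 : e2 t ≠ e3 t := by simp only [e2, e3]; exact div_ne_div_aux hD2 hD3 hDF23
  have hne24 : e2 t ≠ e4 t := by simp only [e2, e4]; exact div_ne_div_aux hD2 hD4 hDF24
  have hne25 : e2 t ≠ e5 t := by simp only [e2, e5]; exact div_ne_div_aux hD2 hD5 hDF25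
  have hne26 : e2 t ≠ e6 t := by simp only [e2, e6]; exact div_ne_div_aux hD2 hD6 hDF26
  have hne34 : e3 t ≠ e4 t := by simp only [e3, e4]; exact div_ne_div_aux hD3 hD4 hDF34
  have hne35 : e3 t ≠ e5 t := by simp only [e3, e5]; exact div_ne_div_aux hD3 hD5 hDF35
  have hne36 : e3 t ≠ e6 t := by simp only [e3, e6]; exact div_ne_div_aux hD3 hD6 hDF36
  have hne45 : e4 t ≠ e5 t := by simp only [e4, e5]; exact div_ne_div_aux hD4 hD5 hDF45
  have hne46 : e4 t ≠ e6 t := by simp only [e4, e6]; exact div_ne_div_aux hD4 hD6 hDF46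
  have hne56 : e5 t ≠ e6 t := by simp only [e5, e6]; exact div_ne_div_aux hD5 hD6 hDF56
  refine ⟨⟨?_, ?_, ?_⟩, hD1, hN1⟩
  · rw [Finset.card_insert_of_notMem (by simp [hne12, hne13, hne14, hne15, hne16]),
        Finset.card_insert_of_notMem (by simp [hne23, hne24, hne25, hne26]),
        Finset.card_insert_of_notMem (by simp [hne34, hne35, hne36]),
        Finset.card_insert_of_notMem (by simp [hne45, hne46]),
        Finset.card_insert_of_notMem (by simp [hne56]),
        Finset.card_singleton]
  · intro h
    simp only [Finset.mem_insert, Finset.mem_singleton] at h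
    rcases h with h|h|h|h|h|h
    · exact he1 h.symm
    · exact he2 h.symm
    · exact he3 h.symm
    · exact he4 h.symm
    · exact he5 h.symm
    · exact he6 h.symm
  · intro a ha b hb hab
    simp only [Finset.mem_insert, Finset.mem_singleton] at ha hb
    rcases ha with rfl|rfl|rfl|rfl|rfl|rfl <;> rcases hb with rfl|rfl|rfl|rfl|rfl|rfl
    · exact absurd rfl hab
    · exact ⟨u12 t / v12 t, sq12 t hD1 hD2 hV12⟩
    · exact ⟨u13 t / v13 t, sq13 t hD1 hD3 hV13⟩
    · exact ⟨u14 t / v14 t, sq14 t hD1 hD4 hV14⟩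
    · exact ⟨u15 t / v15 t, sq15 t hD1 hD5 hV15⟩
    · exact ⟨u16 t / v16 t, sq16 t hD1 hD6 hV16⟩
    · exact ⟨u12 t / v12 t, by rw [mul_comm]; exact sq12 t hD1 hD2 hV12⟩
    · exact absurd rfl hab
    · exact ⟨u23 t / v23 t, sq23 t hD2 hD3 hV23⟩
    · exact ⟨u24 t / v24 t, sq24 t hD2 hD4 hV24⟩
    · exact ⟨u25 t / v25 t, sq25 t hD2 hD5 hV25⟩
    · exact ⟨u26 t / v26 t, sq26 t hD2 hD6 hV26⟩
    · exact ⟨u13 t / v13 t, by rw [mul_comm]; exact sq13 t hD1 hD3 hV13⟩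
    · exact ⟨u23 t / v23 t, by rw [mul_comm]; exact sq23 t hD2 hD3 hV23⟩
    · exact absurd rfl hab
    · exact ⟨u34 t / v34 t, sq34 t hD3 hD4 hV34⟩
    · exact ⟨u35 t / v35 t, sq35 t hD3 hD5 hV35⟩
    · exact ⟨u36 t / v36 t, sq36 t hD3 hD6 hV36⟩
    · exact ⟨u14 t / v14 t, by rw [mul_comm]; exact sq14 t hD1 hD4 hV14⟩
    · exact ⟨u24 t / v24 t, by rw [mul_comm]; exact sq24 t hD2 hD4 hV24⟩
    · exact ⟨u34 t / v34 t, by rw [mul_comm]; exact sq34 t hD3 hD4 hV34⟩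
    · exact absurd rfl hab
    · exact ⟨u45 t / v45 t, sq45 t hD4 hD5 hV45⟩
    · exact ⟨u46 t / v46 t, sq46 t hD4 hD6 hV46⟩
    · exact ⟨u15 t / v15 t, by rw [mul_comm]; exact sq15 t hD1 hD5 hV15⟩
    · exact ⟨u25 t / v25 t, by rw [mul_comm]; exact sq25 t hD2 hD5 hV25⟩
    · exact ⟨u35 t / v35 t, by rw [mul_comm]; exact sq35 t hD3 hD5 hV35⟩
    · exact ⟨u45 t / v45 t, by rw [mul_comm]; exact sq45 t hD4 hD5 hV45⟩
    · exact absurd rfl hab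
    · exact ⟨u56 t / v56 t, sq56 t hD5 hD6 hV56⟩
    · exact ⟨u16 t / v16 t, by rw [mul_comm]; exact sq16 t hD1 hD6 hV16⟩
    · exact ⟨u26 t / v26 t, by rw [mul_comm]; exact sq26 t hD2 hD6 hV26⟩
    · exact ⟨u36 t / v36 t, by rw [mul_comm]; exact sq36 t hD3 hD6 hV36⟩
    · exact ⟨u46 t / v46 t, by rw [mul_comm]; exact sq46 t hD4 hD6 hV46⟩
    · exact ⟨u56 t / v56 t, by rw [mul_comm]; exact sq56 t hD5 hD6 hV56⟩
    · exact absurd rfl hab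

/-- There are infinitely many rational Diophantine sextuples. -/
theorem stmt_15 :
    {S : Finset ℚ | S.card = 6 ∧ (0 : ℚ) ∉ S ∧
      ∀ a ∈ S, ∀ b ∈ S, a ≠ b → ∃ q : ℚ, a * b + 1 = q ^ 2}.Infinite := by
  by_contra hfin
  rw [Set.not_infinite] at hfin
  have hGood : {t : ℚ | Pstar.eval t ≠ 0}.Infinite := by
    have h2 := (Polynomial.finite_setOf_isRoot hPstarNe).infinite_compl
    have h3 : {x : ℚ | Pstar.IsRoot x}ᶜ = {t : ℚ | Pstar.eval t ≠ 0} := by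
      ext x; simp [Polynomial.IsRoot]
    rwa [h3] at h2
  set G : Set ℚ := {t : ℚ | Pstar.eval t ≠ 0} with hG
  set Sx : ℚ → Finset ℚ := fun t => {e1 t, e2 t, e3 t, e4 t, e5 t, e6 t} with hSx
  have hImsub : Sx '' G ⊆ {S : Finset ℚ | S.card = 6 ∧ (0 : ℚ) ∉ S ∧
      ∀ a ∈ S, ∀ b ∈ S, a ≠ b → ∃ q : ℚ, a * b + 1 = q ^ 2} := by
    rintro F ⟨t, ht, rfl⟩
    simp only [Set.mem_setOf_eq, hSx]
    exact (key t ht).1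
  have hImfin : (Sx '' G).Finite := hfin.subset hImsub
  have hVfin : (⋃ F ∈ Sx '' G, (F : Set ℚ)).Finite :=
    hImfin.biUnion (fun F _ => F.finite_toSet)
  have hsub2 : G ⊆ ⋃ v ∈ ((⋃ F ∈ Sx '' G, (F : Set ℚ)) \ {0}),
      {t : ℚ | (N1 - Polynomial.C v * D1).eval t = 0} := by
    intro t ht
    obtain ⟨-, hd1, hn1⟩ := key t ht
    have he1m : e1 t ∈ Sx t := by simp only [hSx]; exact Finset.mem_insert_self _ _
    have hmem1 : e1 t ∈ ⋃ F ∈ Sx '' G, (F : Set ℚ) :=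
      Set.mem_biUnion (Set.mem_image_of_mem Sx ht) he1m
    have he10 : e1 t ≠ 0 := by simp only [e1]; exact div_ne_zero hn1 hd1
    refine Set.mem_biUnion (⟨hmem1, by simpa using he10⟩ :
      e1 t ∈ (⋃ F ∈ Sx '' G, (F : Set ℚ)) \ {0}) ?_
    show (N1 - Polynomial.C (e1 t) * D1).eval t = 0
    rw [Polynomial.eval_sub, Polynomial.eval_mul, Polynomial.eval_C, evN1, evD1]
    simp only [e1]
    field_simp
    ring
  have hfinU : (⋃ v ∈ ((⋃ F ∈ Sx '' G, (F : Set ℚ)) \ {0}),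
      {t : ℚ | (N1 - Polynomial.C v * D1).eval t = 0}).Finite := by
    refine (hVfin.subset Set.diff_subset).biUnion ?_
    intro v hv
    have hv0 : v ≠ 0 := by simpa using hv.2
    exact Polynomial.finite_setOf_isRoot (Qv_ne v hv0)
  exact hGood (hfinU.subset hsub2)
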